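/- Let G and H be connected graphs with G ≠ K_1. If D(G) ≤ D(H), then D(G ∘ H) = D(H). -/

import Mathlib

open SimpleGraph

/-- A vertex labeling with `d` labels is distinguishing if the only automorphism
preserving it is the identity. -/
def IsDistinguishing {V : Type*} (G : SimpleGraph V) {d : ℕ} (c : V → Fin d) : Prop :=
  ∀ φ : G ≃g G, (∀ v, c (φ v) = c v) → ∀ v, φ v = v

/-- The distinguishing number of a graph. -/
noncomputable def distinguishingNumber {V : Type*} (G : SimpleGraph V) : ℕ :=
  sInf {d : ℕ | ∃ c : V → Fin d, IsDistinguishing G c}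

/-- An edge labeling with `d` labels is distinguishing if the only automorphism
preserving it is the identity. -/
def IsDistinguishingEdge {V : Type*} (G : SimpleGraph V) {d : ℕ} (c : G.edgeSet → Fin d) : Prop :=
  ∀ φ : G ≃g G, (∀ e, c (φ.mapEdgeSet e) = c e) → ∀ v, φ v = v

/-- The distinguishing index of a graph. -/
noncomputable def distinguishingIndex {V : Type*} (G : SimpleGraph V) : ℕ :=
  sInf {d : ℕ | ∃ c : G.edgeSet → Fin d, IsDistinguishingEdge G c}

/-- The friendship graph `F n`: `n` triangles glued at a common central vertex `none`. -/
def friendshipGraph (n : ℕ) : SimpleGraph (Option (Fin n × Fin 2)) :=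
  SimpleGraph.fromRel (fun u v =>
    u = none ∨ ∃ i a b, u = some (i, a) ∧ v = some (i, b))

/-- The book graph `B n = K_{1,n} □ P₂`. -/
def bookGraph (n : ℕ) : SimpleGraph ((Fin 1 ⊕ Fin n) × Fin 2) :=
  (completeBipartiteGraph (Fin 1) (Fin n)) □ (SimpleGraph.pathGraph 2)

/-- The corona product `G ∘ H`: one copy of `G`, a copy of `H` for each vertex `v` of `G`,
with `v` joined to every vertex of its copy of `H`. -/
def coronaProduct {V W : Type*} (G : SimpleGraph V) (H : SimpleGraph W) :
    SimpleGraph (V ⊕ V × W) :=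
  SimpleGraph.fromRel (fun a b =>
    (∃ u v, a = Sum.inl u ∧ b = Sum.inl v ∧ G.Adj u v) ∨
    (∃ v w w', a = Sum.inr (v, w) ∧ b = Sum.inr (v, w') ∧ H.Adj w w') ∨
    (∃ v w, a = Sum.inl v ∧ b = Sum.inr (v, w)))

namespace CoronaAux

variable {V W : Type*} {G : SimpleGraph V} {H : SimpleGraph W}


lemma adj_inl_inl {u v : V} :
    (coronaProduct G H).Adj (Sum.inl u) (Sum.inl v) ↔ G.Adj u v := by
  rw [coronaProduct, fromRel_adj]
  constructor
  · rintro ⟨hne, (⟨a, b, ha, hb, hab⟩ | ⟨_,_,_,h,_⟩ | ⟨_,_,_,h⟩) |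
      (⟨a, b, ha, hb, hab⟩ | ⟨_,_,_,h,_⟩ | ⟨_,_,_,h⟩)⟩ <;>
      first
      | (cases ha; cases hb; first | exact hab | exact hab.symm)
      | simp_all
  · intro h
    exact ⟨by simpa using h.ne, Or.inl (Or.inl ⟨u, v, rfl, rfl, h⟩)⟩

lemma adj_inl_inr {u v : V} {w : W} :
    (coronaProduct G H).Adj (Sum.inl u) (Sum.inr (v, w)) ↔ u = v := by
  rw [coronaProduct, fromRel_adj]
  constructor
  · rintro ⟨hne, (⟨_,_,_,h,_⟩ | ⟨_,_,_,h,_⟩ | ⟨a, b, ha, hb⟩) |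
      (⟨_,_,h,_⟩ | ⟨_,_,_,h,_⟩ | ⟨_,_,_,h⟩)⟩ <;> simp_all
  · rintro rfl
    exact ⟨by simp, Or.inl (Or.inr (Or.inr ⟨u, w, rfl, rfl⟩))⟩

lemma adj_inr_inl {u v : V} {w : W} :
    (coronaProduct G H).Adj (Sum.inr (v, w)) (Sum.inl u) ↔ u = v := by
  rw [adj_comm, adj_inl_inr]

lemma adj_inr_inr {v v' : V} {w w' : W} :
    (coronaProduct G H).Adj (Sum.inr (v, w)) (Sum.inr (v', w')) ↔ v = v' ∧ H.Adj w w' := by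
  rw [coronaProduct, fromRel_adj]
  constructor
  · rintro ⟨hne, (⟨_,_,h,_⟩ | ⟨a, b, b', hab, hab', hadj⟩ | ⟨_,_,_,h⟩) |
      (⟨_,_,h,_⟩ | ⟨a, b, b', hab, hab', hadj⟩ | ⟨_,_,_,h⟩)⟩ <;> simp_all
    exact hadj.symm
  · rintro ⟨rfl, h⟩
    exact ⟨by simpa using h.ne, Or.inl (Or.inr (Or.inl ⟨v, w, w', rfl, rfl, h⟩))⟩


lemma exists_adj (hG : G.Connected) [Fintype V] (hV : 2 ≤ Fintype.card V) (v : V) :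
    ∃ u, G.Adj v u := by
  obtain ⟨u, hu⟩ := Fintype.exists_ne_of_one_lt_card (by omega) v
  obtain ⟨p⟩ := hG v u
  cases p with
  | nil => exact absurd rfl hu
  | cons h _ => exact ⟨_, h⟩

noncomputable def nbhdInlEquiv (v : V) :
    (G.neighborSet v ⊕ W) ≃ ((coronaProduct G H).neighborSet (Sum.inl v)) := by
  refine Equiv.ofBijective
    (Sum.elim (fun u => ⟨Sum.inl u.1, adj_inl_inl.2 u.2⟩)
      (fun w => ⟨Sum.inr (v, w), adj_inl_inr.2 rfl⟩)) ⟨?_, ?_⟩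
  · rintro (⟨a, ha⟩ | a) (⟨b, hb⟩ | b) h <;> simp_all [Subtype.ext_iff]
  · rintro ⟨(u | ⟨v', w⟩), hx⟩
    · exact ⟨Sum.inl ⟨u, adj_inl_inl.1 hx⟩, rfl⟩
    · obtain rfl := adj_inl_inr.1 hx
      exact ⟨Sum.inr w, rfl⟩

noncomputable def nbhdInrEquiv (v : V) (w : W) :
    (Unit ⊕ H.neighborSet w) ≃ ((coronaProduct G H).neighborSet (Sum.inr (v, w))) := by
  refine Equiv.ofBijective
    (Sum.elim (fun _ => ⟨Sum.inl v, adj_inr_inl.2 rfl⟩)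
      (fun u => ⟨Sum.inr (v, u.1), adj_inr_inr.2 ⟨rfl, u.2⟩⟩)) ⟨?_, ?_⟩
  · rintro (⟨⟩ | ⟨a, ha⟩) (⟨⟩ | ⟨b, hb⟩) h <;> simp_all [Subtype.ext_iff]
  · rintro ⟨(u | ⟨v', w'⟩), hx⟩
    · obtain rfl := adj_inr_inl.1 hx
      exact ⟨Sum.inl (), rfl⟩
    · obtain ⟨rfl, h⟩ := adj_inr_inr.1 hx
      exact ⟨Sum.inr ⟨w', h⟩, rfl⟩

lemma card_nbhd_inl [Fintype V] [Fintype W] (hG : G.Connected) (hV : 2 ≤ Fintype.card V)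
    (v : V) :
    Fintype.card W + 1 ≤ Nat.card ((coronaProduct G H).neighborSet (Sum.inl v)) := by
  rw [← Nat.card_congr (nbhdInlEquiv (H := H) v), Nat.card_sum]
  have h2 : Nat.card W = Fintype.card W := Nat.card_eq_fintype_card
  have h1 : 0 < Nat.card (G.neighborSet v) := by
    obtain ⟨u, hu⟩ := exists_adj hG hV v
    have : Nonempty (G.neighborSet v) := ⟨⟨u, hu⟩⟩
    exact Nat.card_pos
  omega

lemma card_nbhd_inr [Fintype V] [Fintype W] (v : V) (w : W) :
    Nat.card ((coronaProduct G H).neighborSet (Sum.inr (v, w))) ≤ Fintype.card W := by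
  rw [← Nat.card_congr (nbhdInrEquiv (G := G) v w), Nat.card_sum]
  have h1 : Nat.card (H.neighborSet w) < Fintype.card W := by
    rw [Nat.card_coe_set_eq]
    have hne : H.neighborSet w ≠ Set.univ := fun h => H.irrefl (h ▸ Set.mem_univ w)
    calc (H.neighborSet w).ncard < (Set.univ : Set W).ncard :=
          Set.ncard_lt_ncard (Set.ssubset_univ_iff.2 hne) Set.finite_univ
      _ = Fintype.card W := by rw [Set.ncard_univ, Nat.card_eq_fintype_card]
  have : Nat.card Unit = 1 := Nat.card_unique
  omega

lemma phi_inl [Fintype V] [Fintype W] (hG : G.Connected) (hV : 2 ≤ Fintype.card V)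
    (φ : coronaProduct G H ≃g coronaProduct G H) (v : V) :
    ∃ u, φ (Sum.inl v) = Sum.inl u := by
  rcases h : φ (Sum.inl v) with u | ⟨v', w'⟩
  · exact ⟨u, rfl⟩
  · exfalso
    have hc := Nat.card_congr (φ.mapNeighborSet (Sum.inl v))
    rw [h] at hc
    have h1 := card_nbhd_inl (H := H) hG hV v
    have h2 := card_nbhd_inr (G := G) (H := H) v' w'
    omega


/-- generic distinguishing facts -/
lemma distSet_nonempty {α : Type*} [Fintype α] (G : SimpleGraph α) :
    ∃ c : α → Fin (Fintype.card α), IsDistinguishing G c :=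
  ⟨Fintype.equivFin α, fun φ h v => (Fintype.equivFin α).injective (h v)⟩

lemma mem_of_le {α : Type*} (G : SimpleGraph α) {d d' : ℕ} (h : d ≤ d')
    (hc : ∃ c : α → Fin d, IsDistinguishing G c) :
    ∃ c : α → Fin d', IsDistinguishing G c := by
  obtain ⟨c, hc⟩ := hc
  exact ⟨Fin.castLE h ∘ c, fun φ hp v => hc φ (fun v => Fin.castLE_injective h (hp v)) v⟩

/-- Extend an automorphism of `H` on the copy at `v₀` to the corona product. -/
def extendAut [DecidableEq V] (G : SimpleGraph V) (H : SimpleGraph W) (v₀ : V) (τ : H ≃g H) :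
    coronaProduct G H ≃g coronaProduct G H where
  toEquiv := Equiv.sumCongr (Equiv.refl V)
    (Equiv.prodShear (Equiv.refl V) (fun v => if v = v₀ then τ.toEquiv else Equiv.refl W))
  map_rel_iff' := by
    have hf : ∀ (v : V) (x y : W),
        H.Adj ((if v = v₀ then τ.toEquiv else Equiv.refl W) x)
          ((if v = v₀ then τ.toEquiv else Equiv.refl W) y) ↔ H.Adj x y := by
      intro v x y
      by_cases h : v = v₀
      · subst h; simp only [if_pos rfl]; exact τ.map_rel_iff
      · simp only [if_neg h, Equiv.refl_apply]
    rintro (a | ⟨a, x⟩) (b | ⟨b, y⟩)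
    · simp [adj_inl_inl]
    · simp [adj_inl_inr]
    · simp [adj_inr_inl]
    · simp only [Equiv.sumCongr_apply, Sum.map_inr, Equiv.prodShear_apply, Equiv.refl_apply,
        adj_inr_inr]
      constructor
      · rintro ⟨rfl, h⟩; exact ⟨rfl, (hf a x y).1 h⟩
      · rintro ⟨rfl, h⟩; exact ⟨rfl, (hf a x y).2 h⟩

lemma extendAut_inl [DecidableEq V] (v₀ : V) (τ : H ≃g H) (u : V) :
    extendAut G H v₀ τ (Sum.inl u) = Sum.inl u := rfl

lemma extendAut_inr [DecidableEq V] (v₀ : V) (τ : H ≃g H) (v : V) (w : W) :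
    extendAut G H v₀ τ (Sum.inr (v, w)) = Sum.inr (v, if v = v₀ then τ w else w) := by
  rcases eq_or_ne v v₀ with h | h <;> simp [extendAut, Equiv.prodShear, h]

/-- restriction of a distinguishing coloring to a copy of `H` is distinguishing -/
lemma restrict_distinguishing [DecidableEq V] {d : ℕ} (v₀ : V) (c : (V ⊕ V × W) → Fin d)
    (hc : IsDistinguishing (coronaProduct G H) c) :
    IsDistinguishing H (fun w => c (Sum.inr (v₀, w))) := by
  intro τ hτ w
  have hpres : ∀ x, c (extendAut G H v₀ τ x) = c x := by
    rintro (u | ⟨v, w⟩)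
    · rw [extendAut_inl]
    · rw [extendAut_inr]
      rcases eq_or_ne v v₀ with rfl | h
      · simpa using hτ w
      · simp [h]
  have := hc (extendAut G H v₀ τ) hpres (Sum.inr (v₀, w))
  rw [extendAut_inr] at this
  simpa using this

lemma inr_structure [Fintype V] [Fintype W] (hG : G.Connected) (hV : 2 ≤ Fintype.card V)
    (ψ : coronaProduct G H ≃g coronaProduct G H)
    (hfix : ∀ u, ψ (Sum.inl u) = Sum.inl u) (v : V) (w : W) :
    ∃ w', ψ (Sum.inr (v, w)) = Sum.inr (v, w') := by
  rcases h : ψ (Sum.inr (v, w)) with u | ⟨v', w'⟩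
  · exfalso
    have : ψ (Sum.inl u) = ψ (Sum.inr (v, w)) := by rw [hfix u, h]
    exact absurd (ψ.injective this) (by simp)
  · have hadj : (coronaProduct G H).Adj (Sum.inr (v, w)) (Sum.inl v) := adj_inr_inl.2 rfl
    have h2 := ψ.map_rel_iff.2 hadj
    rw [h, hfix v] at h2
    obtain rfl : v = v' := adj_inr_inl.1 h2
    exact ⟨w', rfl⟩

lemma combined_distinguishing [Fintype V] [Fintype W] (hG : G.Connected) (hH : H.Connected)
    (hV : 2 ≤ Fintype.card V) {d : ℕ} (cG : V → Fin d) (cH : W → Fin d)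
    (hcG : IsDistinguishing G cG) (hcH : IsDistinguishing H cH) :
    IsDistinguishing (coronaProduct G H) (Sum.elim cG (fun p => cH p.2)) := by
  have hWne : Nonempty W := hH.nonempty
  intro φ hφ
  set c : (V ⊕ V × W) → Fin d := Sum.elim cG (fun p => cH p.2) with hcdef
  -- step 1: φ fixes the inl part
  have hinl := phi_inl hG hV φ
  have hinl' := phi_inl hG hV φ.symm
  let l : V ⊕ V × W → V := Sum.elim id Prod.fst
  let σ : V → V := fun v => l (φ (Sum.inl v))
  let σ' : V → V := fun v => l (φ.symm (Sum.inl v))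
  have hσ : ∀ v, φ (Sum.inl v) = Sum.inl (σ v) := fun v => by
    obtain ⟨u, hu⟩ := hinl v; simp only [σ, l, hu]; rfl
  have hσ' : ∀ v, φ.symm (Sum.inl v) = Sum.inl (σ' v) := fun v => by
    obtain ⟨u, hu⟩ := hinl' v; simp only [σ', l, hu]; rfl
  have hls : ∀ v, σ' (σ v) = v := fun v => by
    have h1 : φ.symm (φ (Sum.inl v)) = Sum.inl v := φ.toEquiv.symm_apply_apply _
    rw [hσ v, hσ' (σ v)] at h1
    exact Sum.inl.inj h1
  have hrs : ∀ v, σ (σ' v) = v := fun v => by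
    have h1 : φ (φ.symm (Sum.inl v)) = Sum.inl v := φ.toEquiv.apply_symm_apply _
    rw [hσ' v, hσ (σ' v)] at h1
    exact Sum.inl.inj h1
  let sigmaIso : G ≃g G :=
    { toFun := σ, invFun := σ', left_inv := hls, right_inv := hrs,
      map_rel_iff' := by
        intro a b
        show G.Adj (σ a) (σ b) ↔ G.Adj a b
        rw [← adj_inl_inl (H := H), ← adj_inl_inl (H := H) (u := a), ← hσ, ← hσ]
        exact φ.map_adj_iff }
  have hσid : ∀ v, σ v = v := by
    apply hcG sigmaIso
    intro v
    have h1 := hφ (Sum.inl v)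
    rw [hσ v] at h1
    exact h1
  have hfix : ∀ v, φ (Sum.inl v) = Sum.inl v := fun v => by rw [hσ v, hσid v]
  have hfix' : ∀ v, φ.symm (Sum.inl v) = Sum.inl v := fun v => by
    apply φ.injective
    rw [RelIso.apply_symm_apply, hfix v]
  -- step 2: φ fixes each copy of H setwise, then pointwise
  have hinr := inr_structure hG hV φ hfix
  have hinr' := inr_structure hG hV φ.symm hfix'
  rintro (v | ⟨v, w⟩)
  · exact hfix v
  · let r : V ⊕ V × W → W := Sum.elim (fun _ => Classical.arbitrary W) Prod.snd
    let τ : W → W := fun w => r (φ (Sum.inr (v, w)))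
    let τ' : W → W := fun w => r (φ.symm (Sum.inr (v, w)))
    have hτ : ∀ w, φ (Sum.inr (v, w)) = Sum.inr (v, τ w) := fun w => by
      obtain ⟨w', hw⟩ := hinr v w; simp only [τ, r, hw]; rfl
    have hτ' : ∀ w, φ.symm (Sum.inr (v, w)) = Sum.inr (v, τ' w) := fun w => by
      obtain ⟨w', hw⟩ := hinr' v w; simp only [τ', r, hw]; rfl
    have hlt : ∀ w, τ' (τ w) = w := fun w => by
      have h1 : φ.symm (φ (Sum.inr (v, w))) = Sum.inr (v, w) := φ.toEquiv.symm_apply_apply _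
      rw [hτ w, hτ' (τ w)] at h1
      simpa using h1
    have hrt : ∀ w, τ (τ' w) = w := fun w => by
      have h1 : φ (φ.symm (Sum.inr (v, w))) = Sum.inr (v, w) := φ.toEquiv.apply_symm_apply _
      rw [hτ' w, hτ (τ' w)] at h1
      simpa using h1
    let T : H ≃g H :=
      { toFun := τ, invFun := τ', left_inv := hlt, right_inv := hrt,
        map_rel_iff' := by
          intro x y
          show H.Adj (τ x) (τ y) ↔ H.Adj x y
          have e1 : H.Adj (τ x) (τ y) ↔
              (coronaProduct G H).Adj (Sum.inr (v, τ x)) (Sum.inr (v, τ y)) := by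
            rw [adj_inr_inr]; simp
          have e2 : H.Adj x y ↔
              (coronaProduct G H).Adj (Sum.inr (v, x)) (Sum.inr (v, y)) := by
            rw [adj_inr_inr]; simp
          rw [e1, e2, ← hτ, ← hτ]
          exact φ.map_adj_iff }
    have hτid : ∀ w, τ w = w := by
      apply hcH T
      intro x
      have h1 := hφ (Sum.inr (v, x))
      rw [hτ x] at h1
      exact h1
    rw [hτ w, hτid w]


end CoronaAux

theorem corona_distinguishingNumber_of_le {V W : Type*} [Fintype V] [Fintype W]
    (G : SimpleGraph V) (H : SimpleGraph W)
    (hG : G.Connected) (hH : H.Connected) (hV : 2 ≤ Fintype.card V)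
    (hle : distinguishingNumber G ≤ distinguishingNumber H) :
    distinguishingNumber (coronaProduct G H) = distinguishingNumber H := by
  classical
  have hWne : Nonempty W := hH.nonempty
  have hVne : Nonempty V := hG.nonempty
  have hSHne : {d : ℕ | ∃ c : W → Fin d, IsDistinguishing H c}.Nonempty :=
    ⟨_, CoronaAux.distSet_nonempty H⟩
  have hSGne : {d : ℕ | ∃ c : V → Fin d, IsDistinguishing G c}.Nonempty :=
    ⟨_, CoronaAux.distSet_nonempty G⟩
  have hSCne : {d : ℕ | ∃ c : (V ⊕ V × W) → Fin d,
      IsDistinguishing (coronaProduct G H) c}.Nonempty :=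
    ⟨_, CoronaAux.distSet_nonempty (coronaProduct G H)⟩
  apply le_antisymm
  · -- D(G∘H) ≤ D(H)
    apply Nat.sInf_le
    obtain ⟨cH, hcH⟩ := Nat.sInf_mem hSHne
    obtain ⟨cG, hcG⟩ := CoronaAux.mem_of_le G hle (Nat.sInf_mem hSGne)
    exact ⟨Sum.elim cG (fun p => cH p.2),
      CoronaAux.combined_distinguishing hG hH hV cG cH hcG hcH⟩
  · -- D(H) ≤ D(G∘H)
    apply Nat.sInf_le
    obtain ⟨c, hc⟩ := Nat.sInf_mem hSCne
    obtain ⟨v₀⟩ := hVne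
    exact ⟨fun w => c (Sum.inr (v₀, w)), CoronaAux.restrict_distinguishing v₀ c hc⟩
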